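/- Define a commutative ring structure on the free abelian group A with basis {b(m) : m odd positive integer} by b(q) × b(r) = Σ_{s} b(s), where s ranges over {q+r-1, q+r-3, ..., |q-r|+1}. Then this multiplication is associative and commutative with identity b(1). -/

import Mathlib

/-- Odd positive-index labels for the fusion ring basis b(m), m odd. -/
abbrev OddNat := {m : ℕ // Odd m}

/-- The free abelian group A on the basis {b(m) : m odd}. -/
abbrev FusionA := OddNat →₀ ℤ

/-- The label q + r - 1 - 2k appearing in b(q) × b(r), which is odd. -/
def fusionIdx (q r : OddNat) (k : ℕ) (hk : k < min q.1 r.1) : OddNat :=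
  ⟨q.1 + r.1 - 1 - 2 * k, by
    obtain ⟨a, ha⟩ := q.2; obtain ⟨b, hb⟩ := r.2
    exact ⟨(a + b) - k, by omega⟩⟩

/-- b(q) × b(r) = Σ_{k=0}^{min(q,r)-1} b(q + r - 1 - 2k). -/
noncomputable def fusionBasisMul (q r : OddNat) : FusionA :=
  ∑ k ∈ (Finset.range (min q.1 r.1)).attach,
    Finsupp.single (fusionIdx q r k.1 (Finset.mem_range.mp k.2)) 1

/-- The ℤ-bilinear extension of the basis product to all of A. -/
noncomputable def fusionMul (f g : FusionA) : FusionA :=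
  f.sum fun q a => g.sum fun r c => (a * c) • fusionBasisMul q r

/-- Fusion coefficient: 1 if (q,r,s) satisfies the strict triangle inequalities. -/
def Nfun (q r s : ℕ) : ℤ := if q < r + s ∧ r < q + s ∧ s < q + r then 1 else 0

lemma fusionBasisMul_apply (q r s : OddNat) :
    fusionBasisMul q r s = Nfun q.1 r.1 s.1 := by
  classical
  obtain ⟨a, ha⟩ := q.2; obtain ⟨b, hb⟩ := r.2; obtain ⟨c, hc⟩ := s.2
  rw [fusionBasisMul, Finset.sum_apply']
  have hco : ∀ k ∈ (Finset.range (min q.1 r.1)).attach,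
      (Finsupp.single (fusionIdx q r k.1 (Finset.mem_range.mp k.2)) (1:ℤ)) s
        = if q.1 + r.1 - 1 - 2 * k.1 = s.1 then 1 else 0 := by
    intro k hk
    rw [Finsupp.single_apply]
    congr 1
    simp [fusionIdx, Subtype.ext_iff]
  rw [Finset.sum_congr rfl hco, Finset.sum_attach (Finset.range (min q.1 r.1))
      (fun k => if q.1 + r.1 - 1 - 2 * k = s.1 then (1:ℤ) else 0)]
  rw [← Finset.sum_filter, Nfun]
  by_cases h : q.1 < r.1 + s.1 ∧ r.1 < q.1 + s.1 ∧ s.1 < q.1 + r.1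
  · have he : (Finset.range (min q.1 r.1)).filter (fun k => q.1 + r.1 - 1 - 2 * k = s.1)
        = {(q.1 + r.1 - 1 - s.1) / 2} := by
      ext k
      simp only [Finset.mem_filter, Finset.mem_range, Finset.mem_singleton]
      omega
    rw [he]
    simp [h]
  · have he : (Finset.range (min q.1 r.1)).filter (fun k => q.1 + r.1 - 1 - 2 * k = s.1)
        = ∅ := by
      ext k
      simp only [Finset.mem_filter, Finset.mem_range, Finset.notMem_empty, iff_false]
      omega
    rw [he]
    simp [h]

lemma Nfun_comm (q r s : ℕ) : Nfun q r s = Nfun r q s := by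
  unfold Nfun; split_ifs with h1 h2 h2 <;> first | rfl | omega

lemma fusionBasisMul_comm (q r : OddNat) :
    fusionBasisMul q r = fusionBasisMul r q := by
  ext s; rw [fusionBasisMul_apply, fusionBasisMul_apply, Nfun_comm]

lemma fusionMul_zero_left (g : FusionA) : fusionMul 0 g = 0 := by
  simp [fusionMul]

lemma fusionMul_zero_right (f : FusionA) : fusionMul f 0 = 0 := by
  simp [fusionMul]

lemma fusionMul_add_left (f₁ f₂ g : FusionA) :
    fusionMul (f₁ + f₂) g = fusionMul f₁ g + fusionMul f₂ g := by
  unfold fusionMul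
  apply Finsupp.sum_add_index' <;> intros <;>
    simp [add_mul, add_smul, Finsupp.sum_add]

lemma fusionMul_add_right (f g₁ g₂ : FusionA) :
    fusionMul f (g₁ + g₂) = fusionMul f g₁ + fusionMul f g₂ := by
  unfold fusionMul
  rw [← Finsupp.sum_add]
  apply Finsupp.sum_congr
  intro q _
  apply Finsupp.sum_add_index' <;> intros <;> simp [mul_add, add_smul]

lemma fusionMul_smul_left (z : ℤ) (f g : FusionA) :
    fusionMul (z • f) g = z • fusionMul f g := by
  unfold fusionMul
  rw [Finsupp.sum_smul_index' (by intro i; simp), Finsupp.smul_sum]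
  apply Finsupp.sum_congr
  intro q _
  rw [Finsupp.smul_sum]
  apply Finsupp.sum_congr
  intro r _
  rw [smul_smul]
  congr 1
  simp only [smul_eq_mul]
  ring

lemma fusionMul_smul_right (z : ℤ) (f g : FusionA) :
    fusionMul f (z • g) = z • fusionMul f g := by
  unfold fusionMul
  rw [Finsupp.smul_sum]
  apply Finsupp.sum_congr
  intro q _
  rw [Finsupp.sum_smul_index' (by intro i; simp), Finsupp.smul_sum]
  apply Finsupp.sum_congr
  intro r _
  rw [smul_smul]
  congr 1
  simp only [smul_eq_mul]
  ring

lemma fusionMul_single_single (q r : OddNat) (a c : ℤ) :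
    fusionMul (Finsupp.single q a) (Finsupp.single r c) = (a * c) • fusionBasisMul q r := by
  unfold fusionMul
  rw [Finsupp.sum_single_index (by simp), Finsupp.sum_single_index (by simp)]

lemma fusionMul_sum_left {ι : Type*} (s : Finset ι) (F : ι → FusionA) (g : FusionA) :
    fusionMul (∑ i ∈ s, F i) g = ∑ i ∈ s, fusionMul (F i) g := by
  classical
  induction s using Finset.induction_on with
  | empty => simp [fusionMul_zero_left]
  | insert _ _ h ih => rw [Finset.sum_insert h, Finset.sum_insert h, fusionMul_add_left, ih]

lemma fusionMul_sum_right {ι : Type*} (s : Finset ι) (f : FusionA) (G : ι → FusionA) :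
    fusionMul f (∑ i ∈ s, G i) = ∑ i ∈ s, fusionMul f (G i) := by
  classical
  induction s using Finset.induction_on with
  | empty => simp [fusionMul_zero_right]
  | insert _ _ h ih => rw [Finset.sum_insert h, Finset.sum_insert h, fusionMul_add_right, ih]

set_option maxHeartbeats 2000000 in
/-- The key combinatorial identity behind associativity. -/
lemma key_count (p q r s : ℕ) (hp : Odd p) (hq : Odd q) (hr : Odd r) (hs : Odd s) :
    (∑ k ∈ Finset.range (min p q), Nfun (p + q - 1 - 2 * k) r s)
      = ∑ j ∈ Finset.range (min q r), Nfun p (q + r - 1 - 2 * j) s := by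
  classical
  obtain ⟨a, ha⟩ := hp; obtain ⟨b, hb⟩ := hq; obtain ⟨c, hc⟩ := hr; obtain ⟨d, hd⟩ := hs
  unfold Nfun
  rw [← Finset.sum_filter, ← Finset.sum_filter]
  have e1 : (Finset.range (min p q)).filter
      (fun k => p + q - 1 - 2*k < r + s ∧ r < p + q - 1 - 2*k + s ∧ s < p + q - 1 - 2*k + r)
      = Finset.Ico ((a + b) - (c + d))
          (min (min ((a+b+d+1) - c) ((a+b+c+1) - d)) (min (2*a+1) (2*b+1))) := by
    ext k
    simp only [Finset.mem_filter, Finset.mem_range, Finset.mem_Ico]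
    omega
  have e2 : (Finset.range (min q r)).filter
      (fun j => p < q + r - 1 - 2*j + s ∧ q + r - 1 - 2*j < p + s ∧ s < p + (q + r - 1 - 2*j))
      = Finset.Ico ((b + c) - (a + d))
          (min (min ((b+c+d+1) - a) ((a+b+c+1) - d)) (min (2*b+1) (2*c+1))) := by
    ext j
    simp only [Finset.mem_filter, Finset.mem_range, Finset.mem_Ico]
    omega
  rw [e1, e2, Finset.sum_const, Finset.sum_const, Nat.card_Ico, Nat.card_Ico]
  congr 1
  simp only [min_def]
  split_ifs <;> omega

/-- Associativity on basis elements. -/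
lemma fusion_assoc_basis (p q r : OddNat) :
    fusionMul (fusionBasisMul p q) (Finsupp.single r 1)
      = fusionMul (Finsupp.single p 1) (fusionBasisMul q r) := by
  classical
  rw [fusionBasisMul, fusionBasisMul, fusionMul_sum_left, fusionMul_sum_right]
  ext s
  rw [Finset.sum_apply', Finset.sum_apply']
  have L : ∀ k ∈ (Finset.range (min p.1 q.1)).attach,
      (fusionMul (Finsupp.single (fusionIdx p q k.1 (Finset.mem_range.mp k.2)) 1)
        (Finsupp.single r 1)) s
      = Nfun (p.1 + q.1 - 1 - 2 * k.1) r.1 s.1 := by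
    intro k _
    rw [fusionMul_single_single, one_mul, one_smul, fusionBasisMul_apply]
    rfl
  have R : ∀ j ∈ (Finset.range (min q.1 r.1)).attach,
      (fusionMul (Finsupp.single p 1)
        (Finsupp.single (fusionIdx q r j.1 (Finset.mem_range.mp j.2)) 1)) s
      = Nfun p.1 (q.1 + r.1 - 1 - 2 * j.1) s.1 := by
    intro j _
    rw [fusionMul_single_single, one_mul, one_smul, fusionBasisMul_apply]
    rfl
  rw [Finset.sum_congr rfl L, Finset.sum_congr rfl R,
    Finset.sum_attach (Finset.range (min p.1 q.1))
      (fun k => Nfun (p.1 + q.1 - 1 - 2 * k) r.1 s.1),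
    Finset.sum_attach (Finset.range (min q.1 r.1))
      (fun j => Nfun p.1 (q.1 + r.1 - 1 - 2 * j) s.1)]
  exact key_count p.1 q.1 r.1 s.1 p.2 q.2 r.2 s.2

lemma fusion_assoc_single (p q r : OddNat) (a c e : ℤ) :
    fusionMul (fusionMul (Finsupp.single p a) (Finsupp.single q c)) (Finsupp.single r e)
      = fusionMul (Finsupp.single p a) (fusionMul (Finsupp.single q c) (Finsupp.single r e)) := by
  have hsa : Finsupp.single p a = a • Finsupp.single p (1:ℤ) := by
    rw [Finsupp.smul_single, smul_eq_mul, mul_one]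
  have hsc : Finsupp.single q c = c • Finsupp.single q (1:ℤ) := by
    rw [Finsupp.smul_single, smul_eq_mul, mul_one]
  have hse : Finsupp.single r e = e • Finsupp.single r (1:ℤ) := by
    rw [Finsupp.smul_single, smul_eq_mul, mul_one]
  rw [fusionMul_single_single, fusionMul_single_single, hse, hsa,
    fusionMul_smul_left, fusionMul_smul_right, fusionMul_smul_right, fusionMul_smul_left,
    fusion_assoc_basis, smul_smul, smul_smul]
  congr 1
  ring

lemma fusion_assoc_single_g (p : OddNat) (a : ℤ) (g h : FusionA) :
    fusionMul (fusionMul (Finsupp.single p a) g) h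
      = fusionMul (Finsupp.single p a) (fusionMul g h) := by
  induction g using Finsupp.induction generalizing h with
  | zero => simp [fusionMul_zero_right, fusionMul_zero_left]
  | single_add q c g _ _ ihg =>
    rw [fusionMul_add_right, fusionMul_add_left, fusionMul_add_left, fusionMul_add_right, ihg]
    congr 1
    induction h using Finsupp.induction with
    | zero => simp [fusionMul_zero_right]
    | single_add r e h _ _ ihh =>
      rw [fusionMul_add_right, fusionMul_add_right, fusionMul_add_right, ihh,
        fusion_assoc_single p q r a c e]

lemma fusion_assoc (f g h : FusionA) :
    fusionMul (fusionMul f g) h = fusionMul f (fusionMul g h) := by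
  induction f using Finsupp.induction with
  | zero => simp [fusionMul_zero_left]
  | single_add p a f _ _ ihf =>
    rw [fusionMul_add_left, fusionMul_add_left, fusionMul_add_left, ihf,
      fusion_assoc_single_g p a g h]

lemma fusion_comm_single (p q : OddNat) (a c : ℤ) :
    fusionMul (Finsupp.single p a) (Finsupp.single q c)
      = fusionMul (Finsupp.single q c) (Finsupp.single p a) := by
  rw [fusionMul_single_single, fusionMul_single_single, fusionBasisMul_comm, mul_comm]

lemma fusion_comm (f g : FusionA) : fusionMul f g = fusionMul g f := by
  induction f using Finsupp.induction generalizing g with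
  | zero => simp [fusionMul_zero_left, fusionMul_zero_right]
  | single_add p a f _ _ ihf =>
    rw [fusionMul_add_left, fusionMul_add_right, ihf]
    congr 1
    induction g using Finsupp.induction with
    | zero => simp [fusionMul_zero_left, fusionMul_zero_right]
    | single_add q c g _ _ ihg =>
      rw [fusionMul_add_left, fusionMul_add_right, ihg, fusion_comm_single]

lemma fusionBasisMul_one (r : OddNat) :
    fusionBasisMul ⟨1, odd_one⟩ r = Finsupp.single r 1 := by
  ext s
  rw [fusionBasisMul_apply, Finsupp.single_apply, Nfun]
  obtain ⟨b, hb⟩ := r.2; obtain ⟨c, hc⟩ := s.2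
  have h1 : ((⟨1, odd_one⟩ : OddNat) : ℕ) = 1 := rfl
  simp only [h1]
  by_cases h : r = s
  · subst h
    rw [if_pos (by omega), if_pos rfl]
  · rw [if_neg, if_neg h]
    intro hcond
    exact h (Subtype.ext (by omega))

lemma fusion_one_mul (f : FusionA) :
    fusionMul (Finsupp.single ⟨1, odd_one⟩ 1) f = f := by
  induction f using Finsupp.induction with
  | zero => simp [fusionMul_zero_right]
  | single_add q c f _ _ ihf =>
    rw [fusionMul_add_right, ihf, fusionMul_single_single, fusionBasisMul_one,
      one_mul, Finsupp.smul_single, smul_eq_mul, mul_one]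

theorem fusion_ring_axioms :
    (∀ f g h : FusionA, fusionMul (fusionMul f g) h = fusionMul f (fusionMul g h)) ∧
    (∀ f g : FusionA, fusionMul f g = fusionMul g f) ∧
    (∀ f : FusionA, fusionMul (Finsupp.single ⟨1, odd_one⟩ 1) f = f ∧
      fusionMul f (Finsupp.single ⟨1, odd_one⟩ 1) = f) := by
  refine ⟨fusion_assoc, fusion_comm, fun f => ⟨fusion_one_mul f, ?_⟩⟩
  rw [fusion_comm]
  exact fusion_one_mul f
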